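/- Let E be a countable set with a linear order ≤_B, let W be the group of permutations of E fixing all but finitely many elements, and for w ∈ W let ℓ(w) be the minimal length of an expression of w as a product of transpositions of consecutive elements of (E, ≤_B), with ℓ(w) = ∞ if no such expression exists. Then ℓ(w) = ∞ if and only if there exists e ∈ E such that the set {e' ∈ E : e <_B e' <_B w(e)} is infinite. -/

import Mathlib

variable {E : Type*} [LinearOrder E]

/-- A transposition of two consecutive elements of the linearly ordered set `E`. -/
def IsConsecSwap (s : Equiv.Perm E) : Prop :=
  ∃ e e' : E, e ⋖ e' ∧ s = Equiv.swap e e'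

/-- The length of a finitary permutation with respect to the generating set of
transpositions of consecutive elements: the minimal length of an expression of `w`
as a product of such transpositions, or `⊤` if no such expression exists. -/
noncomputable def ellB (w : Equiv.Perm E) : ℕ∞ :=
  sInf {n : ℕ∞ | ∃ L : List (Equiv.Perm E),
    (∀ s ∈ L, IsConsecSwap s) ∧ L.prod = w ∧ (L.length : ℕ∞) = n}

/-- The inversion set of a permutation. -/
private def Invs (w : Equiv.Perm E) : Set (E × E) := {p : E × E | p.1 < p.2 ∧ w p.2 < w p.1}

/-- If `w` has no descent at any covering pair, then `w` is increasing across any finite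
interval. -/
private lemma chain_lt (w : Equiv.Perm E) (H : ∀ a b : E, a ⋖ b → w a < w b) :
    ∀ n : ℕ, ∀ s t : E, s < t → (Set.Ioo s t).Finite → (Set.Ioo s t).ncard ≤ n →
      w s < w t := by
  intro n
  induction n with
  | zero =>
    intro s t hst hfin hcard
    have hemp : Set.Ioo s t = ∅ := (Set.ncard_eq_zero hfin).mp (Nat.le_zero.mp hcard)
    refine H s t ⟨hst, fun c hc1 hc2 => ?_⟩
    exact Set.eq_empty_iff_forall_notMem.mp hemp c ⟨hc1, hc2⟩
  | succ n ih =>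
    intro s t hst hfin hcard
    rcases Set.eq_empty_or_nonempty (Set.Ioo s t) with hemp | hne
    · refine H s t ⟨hst, fun c hc1 hc2 => ?_⟩
      exact Set.eq_empty_iff_forall_notMem.mp hemp c ⟨hc1, hc2⟩
    · obtain ⟨x, hx, hxmin⟩ := Set.exists_min_image _ id hfin hne
      have hsx : s ⋖ x :=
        ⟨hx.1, fun c hc1 hc2 => absurd (hxmin c ⟨hc1, hc2.trans hx.2⟩) (not_le.2 hc2)⟩
      have h1 : w s < w x := H s x hsx
      have h2 : w x < w t := by
        apply ih x t hx.2 (hfin.subset (Set.Ioo_subset_Ioo_left hx.1.le))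
        have hsub : Set.Ioo x t ⊆ Set.Ioo s t \ {x} := by
          rintro z ⟨hz1, hz2⟩
          exact ⟨⟨hx.1.trans hz1, hz2⟩, by simp [ne_of_gt hz1]⟩
        have h4 := Set.ncard_le_ncard hsub hfin.diff
        have h3 := Set.ncard_diff_singleton_lt_of_mem hx hfin
        omega
      exact h1.trans h2

/-- A finitary permutation with finite intervals `(e, w e)` and no cover descent is the
identity. -/
private lemma eq_one_of_noDescent (w : Equiv.Perm E)
    (hsupp : {e : E | w e ≠ e}.Finite)
    (hP : ∀ e : E, (Set.Ioo e (w e)).Finite)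
    (H : ∀ a b : E, a ⋖ b → w a < w b) : w = 1 := by
  by_contra hne
  have hsne : {e : E | w e ≠ e}.Nonempty := by
    by_contra h
    rw [Set.not_nonempty_iff_eq_empty, Set.eq_empty_iff_forall_notMem] at h
    exact hne (Equiv.ext fun x => not_not.mp (h x))
  obtain ⟨m, hm, hmin⟩ := Set.exists_min_image {e : E | w e ≠ e} id hsupp hsne
  have hm' : w m ≠ m := hm
  have h0 : m < w m := by
    rcases hm'.lt_or_gt with h | h
    · have : w m ∈ {e : E | w e ≠ e} := fun h' => hm' (w.injective h')
      exact absurd (hmin _ this) (not_le.2 h)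
    · exact h
  have key : ∀ k : ℕ, (w ^ k) m < (w ^ (k + 1)) m := by
    intro k
    induction k with
    | zero => simpa using h0
    | succ k ihk =>
      have h1 : (w ^ (k + 1)) m = w ((w ^ k) m) := by rw [pow_succ']; rfl
      have h2 : (w ^ (k + 1 + 1)) m = w ((w ^ (k + 1)) m) := by rw [pow_succ']; rfl
      rw [h2, h1]
      rw [h1] at ihk
      exact chain_lt w H _ _ _ ihk (hP _) le_rfl
  have hmono : StrictMono fun k => (w ^ k) m := strictMono_nat_of_lt_succ key
  have hmem : ∀ k : ℕ, (w ^ k) m ∈ {e : E | w e ≠ e} := by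
    intro k
    have h1 : (w ^ (k + 1)) m = w ((w ^ k) m) := by rw [pow_succ']; rfl
    have := key k
    rw [h1] at this
    exact ne_of_gt this
  exact (Set.infinite_of_injective_forall_mem hmono.injective hmem) hsupp

/-- Crossing lemma: the intervals `(w f, f)` are also finite. -/
private lemma inv_Ioo_finite (w : Equiv.Perm E)
    (hsupp : {e : E | w e ≠ e}.Finite)
    (hP : ∀ e : E, (Set.Ioo e (w e)).Finite) (f : E) :
    (Set.Ioo (w f) f).Finite := by
  by_contra hinf
  replace hinf : (Set.Ioo (w f) f).Infinite := hinf
  have hwf : w f < f := by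
    by_contra h
    exact hinf (by rw [Set.Ioo_eq_empty h]; exact Set.finite_empty)
  have hf : w f ≠ f := ne_of_lt hwf
  have hwfsupp : w f ∈ {e : E | w e ≠ e} := fun h => hf (w.injective h)
  have hI : ((Set.Ioo (w f) f) \ {e : E | w e ≠ e}).Infinite := hinf.diff hsupp
  have hsub : (Set.Ioo (w f) f) \ {e : E | w e ≠ e} ⊆
      ⋃ g ∈ {e : E | w e ≠ e}, Set.Ioc g (w g) := by
    rintro x ⟨⟨hx1, hx2⟩, hxfix⟩
    have hgex : ∃ g ∈ {z : E | w z ≠ z ∧ z < x}, ¬ w g < x := by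
      by_contra hall
      push_neg at hall
      have hAfin : {z : E | w z ≠ z ∧ z < x}.Finite := hsupp.subset fun z hz => hz.1
      have hmaps : Set.MapsTo w {z : E | w z ≠ z ∧ z < x} {z : E | w z ≠ z ∧ z < x} :=
        fun g hg => ⟨fun h => hg.1 (w.injective h), hall g hg⟩
      have hbij : Set.BijOn w {z : E | w z ≠ z ∧ z < x} {z : E | w z ≠ z ∧ z < x} :=
        (hAfin.injOn_iff_bijOn_of_mapsTo hmaps).mp w.injective.injOn
      have hwfA : w f ∈ {z : E | w z ≠ z ∧ z < x} := ⟨hwfsupp, hx1⟩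
      obtain ⟨g, hg, hgf⟩ := hbij.surjOn hwfA
      have hgf' : g = f := w.injective hgf
      subst hgf'
      exact absurd hg.2 (not_lt.2 hx2.le)
    obtain ⟨g, hgA, hgx⟩ := hgex
    exact Set.mem_biUnion hgA.1 ⟨hgA.2, not_lt.mp hgx⟩
  have hfinU : (⋃ g ∈ {e : E | w e ≠ e}, Set.Ioc g (w g)).Finite := by
    refine Set.Finite.biUnion hsupp fun g _ => ?_
    refine ((hP g).insert (w g)).subset ?_
    rintro z ⟨hz1, hz2⟩
    rcases eq_or_lt_of_le hz2 with rfl | h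
    · exact Set.mem_insert _ _
    · exact Set.mem_insert_of_mem _ ⟨hz1, h⟩
  exact hI (hfinU.subset hsub)

/-- The inversion set is finite. -/
private lemma invs_finite (w : Equiv.Perm E)
    (hsupp : {e : E | w e ≠ e}.Finite)
    (hP : ∀ e : E, (Set.Ioo e (w e)).Finite) :
    (Invs w).Finite := by
  have hP' : ∀ e : E, (Set.Ioo (w e) e).Finite := inv_Ioo_finite w hsupp hP
  have hsub : Invs w ⊆ ({e : E | w e ≠ e} ×ˢ {e : E | w e ≠ e}) ∪
      ((⋃ x ∈ {e : E | w e ≠ e}, ({x} : Set E) ×ˢ Set.Ioo x (w x)) ∪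
       (⋃ y ∈ {e : E | w e ≠ e}, Set.Ioo (w y) y ×ˢ ({y} : Set E))) := by
    rintro ⟨x, y⟩ ⟨hxy, hinv⟩
    by_cases hx : w x = x
    · by_cases hy : w y = y
      · rw [hx, hy] at hinv
        exact absurd hinv (not_lt.2 hxy.le)
      · right; right
        rw [hx] at hinv
        exact Set.mem_biUnion hy ⟨⟨hinv, hxy⟩, rfl⟩
    · by_cases hy : w y = y
      · right; left
        rw [hy] at hinv
        exact Set.mem_biUnion hx ⟨rfl, ⟨hxy, hinv⟩⟩
      · left; exact ⟨hx, hy⟩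
  refine (Set.Finite.union (hsupp.prod hsupp) (Set.Finite.union ?_ ?_)).subset hsub
  · exact Set.Finite.biUnion hsupp fun x _ => (Set.finite_singleton x).prod (hP x)
  · exact Set.Finite.biUnion hsupp fun y _ => (hP' y).prod (Set.finite_singleton y)

/-- Multiplying by a cover descent maps the inversion set into the inversion set of `w`
minus the descent itself. -/
private lemma invs_map (w : Equiv.Perm E) {a b : E} (hab : a ⋖ b) (hd : w b < w a) :
    ∀ p ∈ Invs (w * Equiv.swap a b),
      (Equiv.swap a b p.1, Equiv.swap a b p.2) ∈ Invs w \ {((a : E), b)} := by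
  rintro ⟨x, y⟩ ⟨hxy, hv⟩
  simp only [Equiv.Perm.mul_apply] at hv
  have hlt : Equiv.swap a b x < Equiv.swap a b y := by
    rcases eq_or_ne x a with hxa | hxa
    · rcases eq_or_ne y b with hyb | hyb
      · rw [hxa, hyb, Equiv.swap_apply_left, Equiv.swap_apply_right] at hv
        exact absurd hv hd.asymm
      · have hay : a < y := hxa ▸ hxy
        have hby : b < y :=
          lt_of_le_of_ne (le_of_not_gt fun h => hab.2 hay h) (Ne.symm hyb)
        rw [hxa, Equiv.swap_apply_left,
          Equiv.swap_apply_of_ne_of_ne (ne_of_gt (hab.1.trans hby)) hyb]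
        exact hby
    · rcases eq_or_ne x b with hxb | hxb
      · have hby : b < y := hxb ▸ hxy
        have hya : y ≠ a := ne_of_gt (hab.1.trans hby)
        have hyb : y ≠ b := ne_of_gt hby
        rw [hxb, Equiv.swap_apply_right, Equiv.swap_apply_of_ne_of_ne hya hyb]
        exact hab.1.trans hby
      · rcases eq_or_ne y a with hya | hya
        · have hxa' : x < a := hya ▸ hxy
          rw [hya, Equiv.swap_apply_left, Equiv.swap_apply_of_ne_of_ne hxa hxb]
          exact hxa'.trans hab.1
        · rcases eq_or_ne y b with hyb | hyb
          · have hxb' : x < b := hyb ▸ hxy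
            have hxa' : x < a :=
              lt_of_le_of_ne (le_of_not_gt fun h => hab.2 h hxb') hxa
            rw [hyb, Equiv.swap_apply_right, Equiv.swap_apply_of_ne_of_ne hxa hxb]
            exact hxa'
          · rw [Equiv.swap_apply_of_ne_of_ne hxa hxb,
              Equiv.swap_apply_of_ne_of_ne hya hyb]
            exact hxy
  refine ⟨⟨hlt, hv⟩, ?_⟩
  intro hmem
  simp only [Set.mem_singleton_iff, Prod.mk.injEq] at hmem
  obtain ⟨h1, h2⟩ := hmem
  have hx : x = b := by
    have := congrArg (Equiv.swap a b) h1
    rwa [Equiv.swap_apply_self, Equiv.swap_apply_left] at this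
  have hy : y = a := by
    have := congrArg (Equiv.swap a b) h2
    rwa [Equiv.swap_apply_self, Equiv.swap_apply_right] at this
  subst hx; subst hy
  exact absurd hxy (not_lt.2 hab.1.le)

/-- The hard direction: a finitary permutation with finite intervals is a product of
consecutive swaps. -/
private lemma exists_list :
    ∀ n : ℕ, ∀ w : Equiv.Perm E, {e : E | w e ≠ e}.Finite →
      (∀ e : E, (Set.Ioo e (w e)).Finite) → (Invs w).Finite → (Invs w).ncard ≤ n →
      ∃ L : List (Equiv.Perm E), (∀ s ∈ L, IsConsecSwap s) ∧ L.prod = w := by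
  intro n
  induction n with
  | zero =>
    intro w hsupp hP hInv hcard
    have hemp : Invs w = ∅ := (Set.ncard_eq_zero hInv).mp (Nat.le_zero.mp hcard)
    have H : ∀ a b : E, a ⋖ b → w a < w b := by
      intro a b hab
      rcases lt_trichotomy (w a) (w b) with h | h | h
      · exact h
      · exact absurd (w.injective h) hab.1.ne
      · exact absurd (show ((a, b) : E × E) ∈ Invs w from ⟨hab.1, h⟩) (by simp [hemp])
    have hw1 : w = 1 := eq_one_of_noDescent w hsupp hP H
    exact ⟨[], by simp, by simp [hw1]⟩
  | succ n ih =>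
    intro w hsupp hP hInv hcard
    by_cases hw1 : w = 1
    · exact ⟨[], by simp, by simp [hw1]⟩
    have hdesc : ∃ a b : E, a ⋖ b ∧ w b < w a := by
      by_contra hno
      push_neg at hno
      apply hw1
      apply eq_one_of_noDescent w hsupp hP
      intro a b hab
      rcases lt_trichotomy (w a) (w b) with h | h | h
      · exact h
      · exact absurd (w.injective h) hab.1.ne
      · exact absurd h (not_lt.2 (hno a b hab))
    obtain ⟨a, b, hab, hd⟩ := hdesc
    set v := w * Equiv.swap a b with hv
    have hvapp : ∀ x : E, v x = w (Equiv.swap a b x) := fun x => rfl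
    have hsuppv : {e : E | v e ≠ e}.Finite := by
      apply (hsupp.union ((Set.finite_singleton b).insert a)).subset
      intro x hx
      by_cases hxa : x = a
      · right; simp [hxa]
      by_cases hxb : x = b
      · right; simp [hxb]
      left
      simpa [hvapp, Equiv.swap_apply_of_ne_of_ne hxa hxb] using hx
    have hPv : ∀ e : E, (Set.Ioo e (v e)).Finite := by
      intro e
      rcases eq_or_ne e a with rfl | hea
      · rw [show v e = w b by simp [hvapp]]
        refine ((hP b).insert b).subset ?_
        rintro z ⟨hz1, hz2⟩
        rcases eq_or_ne z b with rfl | hzb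
        · exact Set.mem_insert _ _
        · refine Set.mem_insert_of_mem _ ⟨?_, hz2⟩
          exact lt_of_le_of_ne (le_of_not_gt fun h => hab.2 hz1 h) (Ne.symm hzb)
      · rcases eq_or_ne e b with rfl | heb
        · rw [show v e = w a by simp [hvapp]]
          exact (hP a).subset (Set.Ioo_subset_Ioo_left hab.1.le)
        · rw [show v e = w e by simp [hvapp, Equiv.swap_apply_of_ne_of_ne hea heb]]
          exact hP e
    have hmap := invs_map w hab hd
    have habInv : ((a, b) : E × E) ∈ Invs w := ⟨hab.1, hd⟩
    have hInvv : (Invs v).Finite := by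
      have hsub : Invs v ⊆
          (fun p : E × E => (Equiv.swap a b p.1, Equiv.swap a b p.2)) ⁻¹' (Invs w) :=
        fun p hp => (hmap p hp).1
      refine (Set.Finite.preimage ?_ hInv).subset hsub
      exact (((Equiv.swap a b).prodCongr (Equiv.swap a b)).injective).injOn
    have hcardv : (Invs v).ncard ≤ n := by
      have h1 : (Invs v).ncard ≤ (Invs w \ {((a : E), b)}).ncard :=
        Set.ncard_le_ncard_of_injOn
          (fun p : E × E => (Equiv.swap a b p.1, Equiv.swap a b p.2)) hmap
          ((((Equiv.swap a b).prodCongr (Equiv.swap a b)).injective).injOn)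
          hInv.diff
      have h2 := Set.ncard_diff_singleton_lt_of_mem habInv hInv
      omega
    obtain ⟨L, hL, hLprod⟩ := ih v hsuppv hPv hInvv hcardv
    refine ⟨L ++ [Equiv.swap a b], ?_, ?_⟩
    · intro s hs
      rcases List.mem_append.mp hs with h | h
      · exact hL s h
      · rw [List.mem_singleton] at h
        subst h
        exact ⟨a, b, hab, rfl⟩
    · rw [List.prod_append, hLprod, List.prod_singleton, hv, mul_assoc,
        Equiv.swap_mul_self, mul_one]

/-- Any product of consecutive swaps has all intervals `(e, w e)` finite. -/
private lemma list_prod_Ioo_finite :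
    ∀ L : List (Equiv.Perm E), (∀ s ∈ L, IsConsecSwap s) →
      ∀ e : E, (Set.Ioo e (L.prod e)).Finite := by
  intro L
  induction L with
  | nil => intro _ e; simp
  | cons s L ih =>
    intro h e
    obtain ⟨a, b, hab, rfl⟩ := h s List.mem_cons_self
    have hfin := ih (fun t ht => h t (List.mem_cons_of_mem _ ht)) e
    rw [List.prod_cons, Equiv.Perm.mul_apply]
    rcases eq_or_ne (L.prod e) a with hya | hya
    · rw [hya, Equiv.swap_apply_left]
      refine (((hya ▸ hfin : (Set.Ioo e a).Finite)).insert a).subset ?_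
      rintro z ⟨hz1, hz2⟩
      rcases eq_or_ne z a with rfl | hza
      · exact Set.mem_insert _ _
      · refine Set.mem_insert_of_mem _ ⟨hz1, ?_⟩
        exact lt_of_le_of_ne (le_of_not_gt fun hh => hab.2 hh hz2) hza
    · rcases eq_or_ne (L.prod e) b with hyb | hyb
      · rw [hyb, Equiv.swap_apply_right]
        exact (hyb ▸ hfin).subset (Set.Ioo_subset_Ioo_right hab.1.le)
      · rw [Equiv.swap_apply_of_ne_of_ne hya hyb]
        exact hfin

/-- For a finitary permutation `w` of a countable linearly ordered set `E`, the length
`ℓ(w)` is infinite if and only if there exists `e ∈ E` such that the interval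
`{e' : e < e' < w(e)}` is infinite. -/
theorem length_infinite_iff
    [Countable E] (w : Equiv.Perm E) (hw : {e : E | w e ≠ e}.Finite) :
    ellB w = ⊤ ↔ ∃ e : E, {e' : E | e < e' ∧ e' < w e}.Infinite := by
  constructor
  · intro h
    by_contra hc
    push_neg at hc
    have hP : ∀ e : E, (Set.Ioo e (w e)).Finite := fun e => hc e
    have hInv := invs_finite w hw hP
    obtain ⟨L, hL, hprod⟩ := exists_list (Invs w).ncard w hw hP hInv le_rfl
    have hmem : (L.length : ℕ∞) ∈ {n : ℕ∞ | ∃ L' : List (Equiv.Perm E),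
        (∀ s ∈ L', IsConsecSwap s) ∧ L'.prod = w ∧ (L'.length : ℕ∞) = n} :=
      ⟨L, hL, hprod, rfl⟩
    have hle := sInf_le hmem
    rw [show sInf _ = ellB w from rfl, h, top_le_iff] at hle
    exact absurd hle (by simp)
  · rintro ⟨e, he⟩
    rw [ellB, sInf_eq_top]
    rintro n ⟨L, hL, hprod, rfl⟩
    have hfin := list_prod_Ioo_finite L hL e
    rw [hprod] at hfin
    exact absurd hfin he
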